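/- A finite semidistributive lattice contains no crown (of any order 2n, n ≥ 3) as a subposet if and only if it contains no crown of order six as a subposet. -/

import Mathlib

/-- `L` contains a crown of order `2n` as a subposet: minimal elements `a 0,…,a (n-1)`,
maximal elements `b 0,…,b (n-1)`, whose only comparabilities are
`a j < b j` and `a (j+1) < b j` (indices mod `n`). -/
def HasCrown (L : Type*) [Lattice L] (n : ℕ) : Prop :=
  ∃ a b : Fin n → L,
    (∀ i j, a i ≤ b j ↔ (i = j ∨ (i : ℕ) = ((j : ℕ) + 1) % n)) ∧
    (∀ i j, ¬ b i ≤ a j) ∧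
    (∀ i j, i ≠ j → ¬ a i ≤ a j ∧ ¬ b i ≤ b j)

namespace Crown17

lemma one_val {n : ℕ} [NeZero n] (hn : 2 ≤ n) : ((1 : Fin n) : ℕ) = 1 := by
  have h : (1:ℕ) % n = 1 := Nat.mod_eq_of_lt (by omega)
  simp [Fin.val_one', h]

lemma add_one_val {n : ℕ} [NeZero n] (hn : 2 ≤ n) (j : Fin n) :
    ((j + 1 : Fin n) : ℕ) = (j.val + 1) % n := by
  rw [Fin.val_add, one_val hn]

lemma succ_iff {n : ℕ} [NeZero n] (hn : 2 ≤ n) (i j : Fin n) :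
    ((i:ℕ) = ((j:ℕ)+1) % n) ↔ i = j + 1 := by
  rw [Fin.ext_iff, add_one_val hn]

variable {L : Type*} [Lattice L]

/-- reduced crown condition -/
def Cr {n : ℕ} [NeZero n] (a b : Fin n → L) : Prop :=
  ∀ i j, a i ≤ b j ↔ i = j ∨ i = j + 1

lemma cr_of_hasCrown {n : ℕ} [NeZero n] (hn : 2 ≤ n) (h : HasCrown L n) :
    ∃ a b : Fin n → L, Cr a b := by
  obtain ⟨a, b, h1, -, -⟩ := h
  exact ⟨a, b, fun i j => by rw [h1 i j, succ_iff hn]⟩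

end Crown17

namespace Crown17

lemma succ_val {n : ℕ} [NeZero n] (hn : 2 ≤ n) (j : Fin n) :
    ((j+1 : Fin n)).val = j.val + 1 ∨ (j.val = n - 1 ∧ ((j+1 : Fin n)).val = 0) := by
  have hj := j.isLt
  have h := add_one_val hn j
  rcases Nat.lt_or_ge (j.val + 1) n with hlt | hge
  · left; rw [h, Nat.mod_eq_of_lt hlt]
  · right
    have : j.val + 1 = n := by omega
    rw [h, this, Nat.mod_self]
    omega

lemma mk_succ {n : ℕ} [NeZero n] (hn : 2 ≤ n) (j : ℕ) (h : j + 1 < n) :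
    (⟨j+1, h⟩ : Fin n) = ⟨j, by omega⟩ + 1 := by
  have hs := succ_val hn (⟨j, by omega⟩ : Fin n)
  apply Fin.ext
  have h0 : (⟨j, by omega⟩ : Fin n).val = j := rfl
  have h1 : (⟨j+1, h⟩ : Fin n).val = j + 1 := rfl
  omega

variable {L : Type*} [Lattice L]

lemma hasCrown_of_cr {n : ℕ} [NeZero n] (hn : 3 ≤ n) {a b : Fin n → L} (h : Cr a b) :
    HasCrown L n := by
  have hn2 : 2 ≤ n := by omega
  refine ⟨a, b, fun i j => by rw [h i j, succ_iff hn2], ?_, ?_⟩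
  · -- no b i ≤ a j
    intro i j hba
    have hii : a i ≤ b i := (h i i).mpr (Or.inl rfl)
    have hjj : a j ≤ b j := (h j j).mpr (Or.inl rfl)
    have h1 : a i ≤ b j := hii.trans (hba.trans hjj)
    have h2 : a (i+1) ≤ b j := ((h (i+1) i).mpr (Or.inr rfl)).trans (hba.trans hjj)
    have hsi := succ_val hn2 i
    have hsj := succ_val hn2 j
    rcases (h i j).mp h1 with e1 | e1 <;> rcases (h (i+1) j).mp h2 with e2 | e2
    · -- i = j, i+1 = j : i+1 = i
      have := congrArg Fin.val (e2.trans e1.symm)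
      have hi := i.isLt
      omega
    · -- i = j, i+1 = j+1 : b i ≤ a i, look at b (i-1)
      have hbi : b i ≤ a i := e1 ▸ hba
      have him : a i ≤ b (i-1) := (h i (i-1)).mpr (Or.inr (by rw [sub_add_cancel]))
      have h3 : a (i+1) ≤ b (i-1) :=
        ((h (i+1) i).mpr (Or.inr rfl)).trans (hbi.trans him)
      have hsm := succ_val hn2 (i-1)
      have hmi : (i - 1) + 1 = i := by rw [sub_add_cancel]
      have hv := congrArg Fin.val hmi
      have hi := i.isLt
      have hm := (i-1).isLt
      have h1i := (i+1).isLt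
      rcases (h (i+1) (i-1)).mp h3 with e3 | e3
      · have := congrArg Fin.val e3
        omega
      · have := congrArg Fin.val e3
        rw [hmi] at this
        omega
    · -- i = j+1, i+1 = j
      have e : (j+1)+1 = j := by rw [← e1, e2]
      have hs1 := succ_val hn2 (j+1)
      have := congrArg Fin.val e
      have hj := j.isLt
      omega
    · -- i = j+1, i+1 = j+1
      have e : i = j := add_right_cancel e2
      have := congrArg Fin.val (e1.symm.trans e)
      have hj := j.isLt
      omega
  · -- antichains
    intro i j hij
    constructor
    · intro haa
      have h1 : a i ≤ b j := haa.trans ((h j j).mpr (Or.inl rfl))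
      have h2 : a i ≤ b (j-1) :=
        haa.trans ((h j (j-1)).mpr (Or.inr (by rw [sub_add_cancel])))
      have hmj : (j - 1) + 1 = j := by rw [sub_add_cancel]
      have hsm := succ_val hn2 (j-1)
      have hv := congrArg Fin.val hmj
      have hi := i.isLt
      have hj := j.isLt
      have hm := (j-1).isLt
      have hvij : i.val ≠ j.val := fun hv' => hij (Fin.ext hv')
      rcases (h i j).mp h1 with e1 | e1
      · exact hij e1
      rcases (h i (j-1)).mp h2 with e2 | e2
      · have v1 := congrArg Fin.val e1
        have v2 := congrArg Fin.val e2
        have hsj := succ_val hn2 j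
        omega
      · have v1 := congrArg Fin.val e1
        have v2 := congrArg Fin.val e2
        rw [hmj] at v2
        have hsj := succ_val hn2 j
        omega
    · intro hbb
      have h1 : a i ≤ b j := ((h i i).mpr (Or.inl rfl)).trans hbb
      have h2 : a (i+1) ≤ b j := ((h (i+1) i).mpr (Or.inr rfl)).trans hbb
      have hsi := succ_val hn2 i
      have hsj := succ_val hn2 j
      have hi := i.isLt
      have hj := j.isLt
      have hvij : i.val ≠ j.val := fun hv' => hij (Fin.ext hv')
      rcases (h i j).mp h1 with e1 | e1
      · exact hij e1
      rcases (h (i+1) j).mp h2 with e2 | e2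
      · have v1 := congrArg Fin.val e1
        have v2 := congrArg Fin.val e2
        omega
      · have e : i = j := add_right_cancel e2
        exact hij e

end Crown17

namespace Crown17

lemma mk_eq_iff {n : ℕ} {i j : ℕ} (hi : i < n) (hj : j < n) :
    ((⟨i, hi⟩ : Fin n) = ⟨j, hj⟩) ↔ i = j := by
  rw [Fin.ext_iff]

lemma mk_succ_iff {n : ℕ} [NeZero n] (hn : 2 ≤ n) {i j : ℕ} (hi : i < n) (hj : j < n) :
    ((⟨i, hi⟩ : Fin n) = ⟨j, hj⟩ + 1) ↔ i = (j + 1) % n := by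
  rw [← succ_iff hn]

variable {L : Type*} [Lattice L]

lemma gap_crown_top {n : ℕ} [NeZero n] (hn : 3 ≤ n) {a b : Fin n → L} (h : Cr a b) (x : L)
    (g : ℕ) (hg2 : 2 ≤ g) (hgn : g ≤ n - 2)
    (hS : ∀ i : Fin n, i.val = 0 ∨ i.val = g → a i ≤ x)
    (hint : ∀ i : Fin n, 0 < i.val → i.val < g → ¬ a i ≤ x) :
    ∃ A B : Fin (g+1) → L, Cr A B := by
  have hn2 : 2 ≤ n := by omega
  have hm : 2 ≤ g + 1 := by omega
  refine ⟨fun i => a ⟨i.val, by omega⟩,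
          fun j => if hj : j.val < g then b ⟨j.val, by omega⟩ else x, ?_⟩
  intro i j
  have hi := i.isLt
  have hj' := j.isLt
  dsimp only
  by_cases hj : j.val < g
  · rw [dif_pos hj, h, mk_eq_iff, mk_succ_iff hn2, ← succ_iff hm i j, Fin.ext_iff]
    have e1 : (j.val + 1) % n = j.val + 1 := Nat.mod_eq_of_lt (by omega)
    have e2 : (j.val + 1) % (g+1) = j.val + 1 := Nat.mod_eq_of_lt (by omega)
    omega
  · rw [dif_neg hj]
    have hjg : j.val = g := by omega
    rw [← succ_iff hm i j, Fin.ext_iff]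
    have e2 : (j.val + 1) % (g+1) = 0 := by rw [hjg, Nat.mod_self]
    constructor
    · intro hax
      by_cases hi0 : i.val = 0
      · right; omega
      by_cases hig : i.val = g
      · left; omega
      · exact absurd hax (hint ⟨i.val, by omega⟩ (show 0 < i.val by omega)
          (show i.val < g by omega))
    · intro hc
      exact hS ⟨i.val, by omega⟩ (show i.val = 0 ∨ i.val = g by omega)

lemma gap_crown_bot {n : ℕ} [NeZero n] (hn : 3 ≤ n) {a b : Fin n → L} (h : Cr a b) (y : L)
    (g : ℕ) (hg2 : 2 ≤ g) (hgn : g ≤ n - 2)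
    (hS : ∀ j : Fin n, j.val = 0 ∨ j.val = g → y ≤ b j)
    (hint : ∀ j : Fin n, 0 < j.val → j.val < g → ¬ y ≤ b j) :
    ∃ A B : Fin (g+1) → L, Cr A B := by
  have hn2 : 2 ≤ n := by omega
  have hm : 2 ≤ g + 1 := by omega
  refine ⟨fun i => if hi : i.val = 0 then y else a ⟨i.val, by omega⟩,
          fun j => b ⟨j.val, by omega⟩, ?_⟩
  intro i j
  have hi' := i.isLt
  have hj' := j.isLt
  dsimp only
  by_cases hi : i.val = 0
  · rw [dif_pos hi, ← succ_iff hm i j, Fin.ext_iff]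
    constructor
    · intro hyb
      by_cases hj0 : j.val = 0
      · left; omega
      by_cases hjg : j.val = g
      · right; rw [hjg, Nat.mod_self]; omega
      · exact absurd hyb (hint ⟨j.val, by omega⟩ (show 0 < j.val by omega)
          (show j.val < g by omega))
    · intro hc
      rcases hc with hc | hc
      · exact hS ⟨j.val, by omega⟩ (Or.inl (show j.val = 0 by omega))
      · have : j.val = g := by
          rcases Nat.lt_or_ge (j.val + 1) (g+1) with hlt | hge
          · rw [Nat.mod_eq_of_lt hlt] at hc; omega
          · omega
        exact hS ⟨j.val, by omega⟩ (Or.inr (show j.val = g from this))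
  · rw [dif_neg hi, h, mk_eq_iff, mk_succ_iff hn2, ← succ_iff hm i j, Fin.ext_iff]
    have e1 : (j.val + 1) % n = j.val + 1 := Nat.mod_eq_of_lt (by omega)
    by_cases hjg : j.val = g
    · have e2 : (j.val + 1) % (g+1) = 0 := by rw [hjg, Nat.mod_self]
      omega
    · have e2 : (j.val + 1) % (g+1) = j.val + 1 := Nat.mod_eq_of_lt (by omega)
      omega

end Crown17

namespace Crown17

open Fin.CommRing in
lemma find_gap {n : ℕ} [NeZero n] (hn : 3 ≤ n) (P : Fin n → Prop)
    (p1 p2 p3 : Fin n) (h1 : P p1) (h2 : P p2) (h3 : P p3)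
    (h12 : p1 ≠ p2) (h13 : p1 ≠ p3) (h23 : p2 ≠ p3)
    (q : Fin n) (hq : ¬ P q) :
    ∃ (s : Fin n) (g : ℕ), 2 ≤ g ∧ g ≤ n - 2 ∧ P s ∧ P (s + (g : Fin n)) ∧
      ∀ r : ℕ, 0 < r → r < g → ¬ P (s + (r : Fin n)) := by
  classical
  have hne : ∀ p : Fin n, P p → p ≠ q := fun p hp e => hq (e ▸ hp)
  have hval1 : ∀ p : Fin n, P p → 1 ≤ (p - q).val := by
    intro p hp
    have : p - q ≠ 0 := fun e => hne p hp (sub_eq_zero.mp e)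
    have hv : ¬ (p - q).val = 0 := fun e => this (by apply Fin.ext; simpa using e)
    omega
  have hfwd : ∀ p : Fin n, P p → P (q + (((p - q).val : ℕ) : Fin n)) := by
    intro p hp
    rwa [Fin.cast_val_eq_self, add_sub_cancel]
  have hbwd : ∀ p : Fin n, P p → P (q - ((n - (p - q).val : ℕ) : Fin n)) := by
    intro p hp
    have hle : (p - q).val ≤ n := le_of_lt (p - q).isLt
    rw [Nat.cast_sub hle, Fin.natCast_self, zero_sub, sub_neg_eq_add,
      Fin.cast_val_eq_self, add_sub_cancel]
    exact hp
  have hex' : ∃ t : ℕ, 1 ≤ t ∧ P (q + (t : Fin n)) :=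
    ⟨(p1 - q).val, hval1 p1 h1, hfwd p1 h1⟩
  have hexb : ∃ t : ℕ, 1 ≤ t ∧ P (q - (t : Fin n)) :=
    ⟨n - (p1 - q).val, by have := (p1 - q).isLt; have := hval1 p1 h1; omega, hbwd p1 h1⟩
  set d' := Nat.find hex' with hd'
  set d := Nat.find hexb with hd
  have hd'spec := Nat.find_spec hex'
  have hdspec := Nat.find_spec hexb
  have hd'min : ∀ t, 1 ≤ t → t < d' → ¬ P (q + (t : Fin n)) := by
    intro t ht1 htd hP
    exact Nat.find_min hex' htd ⟨ht1, hP⟩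
  have hdmin : ∀ t, 1 ≤ t → t < d → ¬ P (q - (t : Fin n)) := by
    intro t ht1 htd hP
    exact Nat.find_min hexb htd ⟨ht1, hP⟩
  have hd'le : ∀ p : Fin n, P p → d' ≤ (p - q).val := fun p hp =>
    Nat.find_min' hex' ⟨hval1 p hp, hfwd p hp⟩
  have hdle : ∀ p : Fin n, P p → d ≤ n - (p - q).val := fun p hp =>
    Nat.find_min' hexb ⟨by have := (p - q).isLt; have := hval1 p hp; omega, hbwd p hp⟩
  -- the three distances are distinct
  have hdist : ∀ p p' : Fin n, p ≠ p' → (p - q).val ≠ (p' - q).val := by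
    intro p p' hpp' e
    exact hpp' (by rw [← sub_add_cancel p q, ← sub_add_cancel p' q, Fin.ext_iff, Fin.val_add,
      Fin.val_add, e])
  have e12 := hdist p1 p2 h12
  have e13 := hdist p1 p3 h13
  have e23 := hdist p2 p3 h23
  have b1 := (p1 - q).isLt
  have b2 := (p2 - q).isLt
  have b3 := (p3 - q).isLt
  have hgbound : d + d' ≤ n - 2 := by
    have l1 := hd'le p1 h1; have l2 := hd'le p2 h2; have l3 := hd'le p3 h3
    have m1 := hdle p1 h1; have m2 := hdle p2 h2; have m3 := hdle p3 h3
    have v1 := hval1 p1 h1; have v2 := hval1 p2 h2; have v3 := hval1 p3 h3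
    omega
  have hd1 : 1 ≤ d := hdspec.1
  have hd'1 : 1 ≤ d' := hd'spec.1
  refine ⟨q - (d : Fin n), d + d', by omega, hgbound, hdspec.2, ?_, ?_⟩
  · have : q - (d : Fin n) + ((d + d' : ℕ) : Fin n) = q + (d' : Fin n) := by
      rw [Nat.cast_add]
      ring
    rw [this]
    exact hd'spec.2
  · intro r hr1 hr2
    rcases Nat.lt_trichotomy r d with hc | hc | hc
    · have : q - (d : Fin n) + (r : Fin n) = q - ((d - r : ℕ) : Fin n) := by
        rw [Nat.cast_sub (by omega)]
        ring
      rw [this]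
      exact hdmin (d - r) (by omega) (by omega)
    · have : q - (d : Fin n) + (r : Fin n) = q := by rw [hc]; ring
      rw [this]; exact hq
    · have : q - (d : Fin n) + (r : Fin n) = q + ((r - d : ℕ) : Fin n) := by
        rw [Nat.cast_sub (by omega)]
        ring
      rw [this]
      exact hd'min (r - d) (by omega) (by omega)

end Crown17

namespace Crown17

variable {L : Type*} [Lattice L]

/-- instance-free version of the crown condition -/
def CrN {n : ℕ} (a b : Fin n → L) : Prop :=
  ∀ i j, a i ≤ b j ↔ i = j ∨ (i:ℕ) = ((j:ℕ)+1) % n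

lemma crN_iff {n : ℕ} [NeZero n] (hn : 2 ≤ n) {a b : Fin n → L} : CrN a b ↔ Cr a b :=
  forall₂_congr fun i j => by rw [succ_iff hn]

lemma cr_rot {n : ℕ} [NeZero n] {a b : Fin n → L} (h : Cr a b) (s : Fin n) :
    Cr (fun i => a (s + i)) (fun j => b (s + j)) := by
  intro i j
  dsimp only
  have h3 : s + j + 1 = s + (j + 1) := add_assoc s j 1
  rw [h, h3, add_right_inj, add_right_inj]

open Fin.CommRing in
lemma reduce {n : ℕ} [NeZero n]
    (hSDj : ∀ a b c : L, a ⊔ b = a ⊔ c → a ⊔ b = a ⊔ (b ⊓ c))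
    (hn : 4 ≤ n) {a b : Fin n → L} (h : Cr a b) :
    ∃ m : ℕ, 3 ≤ m ∧ m < n ∧ ∃ A B : Fin m → L, CrN A B := by
  have hn3 : 3 ≤ n := by omega
  have hn2 : 2 ≤ n := by omega
  have key_top : ∀ x : L, ∀ p1 p2 p3 : Fin n, p1 ≠ p2 → p1 ≠ p3 → p2 ≠ p3 →
      a p1 ≤ x → a p2 ≤ x → a p3 ≤ x →
      (∀ k, a k ≤ x) ∨ ∃ m, 3 ≤ m ∧ m < n ∧ ∃ A B : Fin m → L, CrN A B := by
    intro x p1 p2 p3 h12 h13 h23 hp1 hp2 hp3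
    by_cases hall : ∀ k, a k ≤ x
    · exact Or.inl hall
    · right
      push_neg at hall
      obtain ⟨q, hqx⟩ := hall
      obtain ⟨s, g, hg2, hgn, hPs, hPg, hPint⟩ :=
        find_gap hn3 (fun k => a k ≤ x) p1 p2 p3 hp1 hp2 hp3 h12 h13 h23 q hqx
      refine ⟨g + 1, by omega, by omega, ?_⟩
      suffices hcr : ∃ A B : Fin (g+1) → L, Cr A B by
        obtain ⟨A, B, hAB⟩ := hcr
        exact ⟨A, B, (crN_iff (by omega)).mpr hAB⟩
      refine gap_crown_top hn3 (cr_rot h s) x g hg2 hgn ?_ ?_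
      · intro i hi
        rcases hi with hi | hi
        · have e : i = 0 := Fin.ext (by simpa using hi)
          rw [e, add_zero]
          exact hPs
        · have e : i = (g : Fin n) := by
            apply Fin.ext
            rw [Fin.val_natCast]
            have hgn' : g % n = g := Nat.mod_eq_of_lt (by omega)
            omega
          rw [e]
          exact hPg
      · intro i h0 hg'
        have e : i = ((i.val : ℕ) : Fin n) := (Fin.cast_val_eq_self i).symm
        rw [e]
        exact hPint i.val h0 hg'
  have key_bot : ∀ y : L, ∀ p1 p2 p3 : Fin n, p1 ≠ p2 → p1 ≠ p3 → p2 ≠ p3 →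
      y ≤ b p1 → y ≤ b p2 → y ≤ b p3 →
      (∀ k, y ≤ b k) ∨ ∃ m, 3 ≤ m ∧ m < n ∧ ∃ A B : Fin m → L, CrN A B := by
    intro y p1 p2 p3 h12 h13 h23 hp1 hp2 hp3
    by_cases hall : ∀ k, y ≤ b k
    · exact Or.inl hall
    · right
      push_neg at hall
      obtain ⟨q, hqy⟩ := hall
      obtain ⟨s, g, hg2, hgn, hPs, hPg, hPint⟩ :=
        find_gap hn3 (fun k => y ≤ b k) p1 p2 p3 hp1 hp2 hp3 h12 h13 h23 q hqy
      refine ⟨g + 1, by omega, by omega, ?_⟩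
      suffices hcr : ∃ A B : Fin (g+1) → L, Cr A B by
        obtain ⟨A, B, hAB⟩ := hcr
        exact ⟨A, B, (crN_iff (by omega)).mpr hAB⟩
      refine gap_crown_bot hn3 (cr_rot h s) y g hg2 hgn ?_ ?_
      · intro j hj
        rcases hj with hj | hj
        · have e : j = 0 := Fin.ext (by simpa using hj)
          rw [e, add_zero]
          exact hPs
        · have e : j = (g : Fin n) := by
            apply Fin.ext
            rw [Fin.val_natCast]
            have hgn' : g % n = g := Nat.mod_eq_of_lt (by omega)
            omega
          rw [e]
          exact hPg
      · intro j h0 hg'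
        have e : j = ((j.val : ℕ) : Fin n) := (Fin.cast_val_eq_self j).symm
        rw [e]
        exact hPint j.val h0 hg'
  -- concrete indices
  have i0 : (0:ℕ) < n := by omega
  have i1 : (1:ℕ) < n := by omega
  have i2 : (2:ℕ) < n := by omega
  have i3 : (3:ℕ) < n := by omega
  have r00 : a ⟨0, i0⟩ ≤ b ⟨0, i0⟩ := (h _ _).mpr (Or.inl rfl)
  have r10 : a ⟨1, i1⟩ ≤ b ⟨0, i0⟩ := (h _ _).mpr (Or.inr (mk_succ hn2 0 i1))
  have r21 : a ⟨2, i2⟩ ≤ b ⟨1, i1⟩ := (h _ _).mpr (Or.inr (mk_succ hn2 1 i2))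
  have r22 : a ⟨2, i2⟩ ≤ b ⟨2, i2⟩ := (h _ _).mpr (Or.inl rfl)
  have r33 : a ⟨3, i3⟩ ≤ b ⟨3, i3⟩ := (h _ _).mpr (Or.inl rfl)
  have ne01 : (⟨0, i0⟩ : Fin n) ≠ ⟨1, i1⟩ := by simp
  have ne02 : (⟨0, i0⟩ : Fin n) ≠ ⟨2, i2⟩ := by simp
  have ne03 : (⟨0, i0⟩ : Fin n) ≠ ⟨3, i3⟩ := by simp
  have ne12 : (⟨1, i1⟩ : Fin n) ≠ ⟨2, i2⟩ := by simp
  have ne13 : (⟨1, i1⟩ : Fin n) ≠ ⟨3, i3⟩ := by simp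
  have ne23 : (⟨2, i2⟩ : Fin n) ≠ ⟨3, i3⟩ := by simp
  rcases key_top (b ⟨0, i0⟩ ⊔ a ⟨2, i2⟩) ⟨0, i0⟩ ⟨1, i1⟩ ⟨2, i2⟩ ne01 ne02 ne12
      (r00.trans le_sup_left) (r10.trans le_sup_left) le_sup_right with hall1 | done
  swap
  · exact done
  rcases key_top (b ⟨0, i0⟩ ⊔ a ⟨3, i3⟩) ⟨0, i0⟩ ⟨1, i1⟩ ⟨3, i3⟩ ne01 ne03 ne13
      (r00.trans le_sup_left) (r10.trans le_sup_left) le_sup_right with hall2 | done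
  swap
  · exact done
  have hx12 : b ⟨0, i0⟩ ⊔ a ⟨2, i2⟩ = b ⟨0, i0⟩ ⊔ a ⟨3, i3⟩ :=
    le_antisymm (sup_le le_sup_left (hall2 ⟨2, i2⟩)) (sup_le le_sup_left (hall1 ⟨3, i3⟩))
  have hw := hSDj _ _ _ hx12
  have hw1 : a ⟨2, i2⟩ ⊓ a ⟨3, i3⟩ ≤ b ⟨1, i1⟩ := inf_le_left.trans r21
  have hw2 : a ⟨2, i2⟩ ⊓ a ⟨3, i3⟩ ≤ b ⟨2, i2⟩ := inf_le_left.trans r22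
  have hw3 : a ⟨2, i2⟩ ⊓ a ⟨3, i3⟩ ≤ b ⟨3, i3⟩ := inf_le_right.trans r33
  rcases key_bot (a ⟨2, i2⟩ ⊓ a ⟨3, i3⟩) ⟨1, i1⟩ ⟨2, i2⟩ ⟨3, i3⟩ ne12 ne13 ne23
      hw1 hw2 hw3 with hall3 | done
  swap
  · exact done
  exfalso
  have hwb0 : a ⟨2, i2⟩ ⊓ a ⟨3, i3⟩ ≤ b ⟨0, i0⟩ := hall3 ⟨0, i0⟩
  have hb : b ⟨0, i0⟩ ⊔ a ⟨2, i2⟩ = b ⟨0, i0⟩ := by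
    rw [hw]
    exact sup_eq_left.mpr hwb0
  have h20 : a ⟨2, i2⟩ ≤ b ⟨0, i0⟩ := le_sup_right.trans hb.le
  rcases (h _ _).mp h20 with e | e
  · exact ne02.symm e
  · have := (mk_succ_iff hn2 i2 i0).mp e
    have h1n : (0 + 1) % n = 1 := by
      rw [Nat.zero_add, Nat.mod_eq_of_lt (by omega)]
    omega

end Crown17

namespace Crown17

variable {L : Type*} [Lattice L]

lemma crown3_of_crown {L : Type*} [Lattice L]
    (hSDj : ∀ a b c : L, a ⊔ b = a ⊔ c → a ⊔ b = a ⊔ (b ⊓ c)) :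
    ∀ n : ℕ, 3 ≤ n → HasCrown L n → HasCrown L 3 := by
  intro n
  induction n using Nat.strong_induction_on with
  | _ n ih =>
    intro hn hc
    rcases eq_or_lt_of_le hn with he | hlt
    · exact he ▸ hc
    · haveI : NeZero n := ⟨by omega⟩
      obtain ⟨a, b, hcr⟩ := cr_of_hasCrown (by omega) hc
      obtain ⟨m, hm3, hmn, A, B, hAB⟩ := reduce hSDj (by omega) hcr
      haveI : NeZero m := ⟨by omega⟩
      exact ih m hmn hm3 (hasCrown_of_cr hm3 ((crN_iff (by omega)).mp hAB))

end Crown17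

theorem stmt17 {L : Type*} [Lattice L] [Fintype L]
    (hSDj : ∀ a b c : L, a ⊔ b = a ⊔ c → a ⊔ b = a ⊔ (b ⊓ c))
    (hSDm : ∀ a b c : L, a ⊓ b = a ⊓ c → a ⊓ b = a ⊓ (b ⊔ c)) :
    (¬ ∃ n : ℕ, 3 ≤ n ∧ HasCrown L n) ↔ ¬ HasCrown L 3 := by
  constructor
  · intro hno h3
    exact hno ⟨3, le_refl 3, h3⟩
  · rintro h3 ⟨n, hn, hc⟩
    exact h3 (Crown17.crown3_of_crown hSDj n hn hc)
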